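/- Let g : ℕ → ℝ be nonnegative and nondecreasing, and let S be a tree eccentric sequence. Then among all trees with eccentric sequence S that minimise W(·; g), at least one is a caterpillar. If g is strictly increasing, then every tree with eccentric sequence S minimising W(·; g) is a caterpillar. -/

import Mathlib

open SimpleGraph Finset

attribute [local instance] Classical.propDecidable

variable {V : Type*}

/-- The eccentricity of a vertex: the maximum distance to any other vertex. -/
noncomputable def ecc [Fintype V] (G : SimpleGraph V) (v : V) : ℕ :=
  Finset.univ.sup fun u => G.dist v u

/-- The diameter: the maximum eccentricity. -/
noncomputable def graphDiam [Fintype V] (G : SimpleGraph V) : ℕ :=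
  Finset.univ.sup fun v => ecc G v

/-- The radius: the minimum eccentricity. -/
noncomputable def graphRad [Fintype V] [Nonempty V] (G : SimpleGraph V) : ℕ :=
  Finset.univ.inf' Finset.univ_nonempty fun v => ecc G v

/-- The Wiener-type index `W(G;g)`: sum of `g (d(u,v))` over unordered pairs of
distinct vertices (here realised as half of the sum over ordered pairs). -/
noncomputable def wiener [Fintype V] (G : SimpleGraph V) (g : ℕ → ℝ) : ℝ :=
  (∑ p ∈ Finset.univ.offDiag, g (G.dist p.1 p.2)) / 2

/-- Steiner distance of a set `A`: minimum number of edges of a subtree whose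
vertex set contains `A` (in a tree, a connected subgraph on `m+1` vertices has `m` edges). -/
noncomputable def steinerDist [Fintype V] (G : SimpleGraph V) (A : Finset V) : ℕ :=
  sInf {m | ∃ S : Finset V, A ⊆ S ∧ (G.induce (S : Set V)).Connected ∧ S.card = m + 1}

/-- The `k`-Steiner Wiener index. -/
noncomputable def steinerWiener [Fintype V] (G : SimpleGraph V) (k : ℕ) : ℕ :=
  ∑ A ∈ Finset.univ.powersetCard k, steinerDist G A

/-- A leaf (pendent vertex): a vertex of degree 1. -/
def IsLeaf (G : SimpleGraph V) (v : V) : Prop :=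
  Nat.card {u : V // G.Adj v u} = 1

/-- A caterpillar: a tree in which deleting all leaves yields a path;
equivalently (for trees) every non-leaf vertex has at most two non-leaf neighbours. -/
def IsCaterpillar (G : SimpleGraph V) : Prop :=
  ∀ v : V, ¬ IsLeaf G v → Nat.card {u : V // G.Adj v u ∧ ¬ IsLeaf G u} ≤ 2

/-- Two graphs have the same eccentric sequence. -/
def sameEccSeq {W : Type*} [Fintype V] [Fintype W]
    (G : SimpleGraph V) (H : SimpleGraph W) : Prop :=
  ∀ k : ℕ, Nat.card {v : V // ecc G v = k} = Nat.card {w : W // ecc H w = k}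

set_option linter.unusedVariables false
set_option linter.unusedSectionVars false
set_option maxHeartbeats 1000000

namespace Stmt13Aux


/-- a geodesic path -/
lemma exists_geodesic {G : SimpleGraph V} {u v : V} (h : G.Reachable u v) :
    ∃ p : G.Walk u v, p.IsPath ∧ p.length = G.dist u v := by
  obtain ⟨w, hw⟩ := h.exists_walk_length_eq_dist
  refine ⟨w.bypass, SimpleGraph.Walk.bypass_isPath w, le_antisymm ?_ ?_⟩
  · exact hw ▸ SimpleGraph.Walk.length_bypass_le w
  · exact SimpleGraph.dist_le _

/-- splitting a geodesic at a support vertex -/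
lemma dist_split {G : SimpleGraph V} {u v x : V} {p : G.Walk u v}
    (hp : p.length = G.dist u v) (hx : x ∈ p.support) :
    G.dist u v = G.dist u x + G.dist x v ∧ G.dist u x ≤ (p.takeUntil x hx).length ∧
      G.dist x v ≤ (p.dropUntil x hx).length := by
  have hsplit := SimpleGraph.Walk.take_spec p hx
  have hlen : (p.takeUntil x hx).length + (p.dropUntil x hx).length = p.length := by
    conv_rhs => rw [← hsplit]
    rw [SimpleGraph.Walk.length_append]
  have h1 : G.dist u x ≤ (p.takeUntil x hx).length := SimpleGraph.dist_le _
  have h2 : G.dist x v ≤ (p.dropUntil x hx).length := SimpleGraph.dist_le _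
  have h3 : G.dist u v ≤ G.dist u x + G.dist x v := by
    obtain ⟨w1, _, e1⟩ := exists_geodesic ⟨p.takeUntil x hx⟩
    obtain ⟨w2, _, e2⟩ := exists_geodesic ⟨p.dropUntil x hx⟩
    calc G.dist u v ≤ (w1.append w2).length := SimpleGraph.dist_le _
      _ = G.dist u x + G.dist x v := by rw [SimpleGraph.Walk.length_append, e1, e2]
  refine ⟨le_antisymm h3 ?_, h1, h2⟩
  omega

private lemma low_aux {G : SimpleGraph V} {D : V → ℕ}
    (lip : ∀ x y, G.Adj x y → D x ≤ D y + 1) :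
    ∀ {u v : V} (w : G.Walk u v), D u ≤ w.length + D v := by
  intro u v w
  induction w with
  | nil => simp
  | cons h w ih =>
    have := lip _ _ h
    simp only [SimpleGraph.Walk.length_cons]
    omega

/-- Exact distance via a "Lipschitz + decrement" witness function. Also yields reachability. -/
lemma dist_eq_of_witness {G : SimpleGraph V} {t : V} (D : V → ℕ) (h0 : D t = 0)
    (lip : ∀ x y, G.Adj x y → D x ≤ D y + 1)
    (dec : ∀ x, x ≠ t → ∃ y, G.Adj x y ∧ D y + 1 = D x) (x : V) :
    G.Reachable x t ∧ G.dist x t = D x := by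
  have up : ∀ n (x : V), D x ≤ n → ∃ w : G.Walk x t, w.length ≤ D x := by
    intro n
    induction n with
    | zero =>
      intro x hx
      have hx0 : D x = 0 := Nat.le_zero.mp hx
      by_cases hxt : x = t
      · subst hxt; exact ⟨SimpleGraph.Walk.nil, by simp⟩
      · obtain ⟨y, hadj, hy⟩ := dec x hxt; omega
    | succ n ih =>
      intro x hx
      by_cases hxt : x = t
      · subst hxt; exact ⟨SimpleGraph.Walk.nil, by simp⟩
      · obtain ⟨y, hadj, hy⟩ := dec x hxt
        obtain ⟨w, hw⟩ := ih y (by omega)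
        refine ⟨SimpleGraph.Walk.cons hadj w, ?_⟩
        simp only [SimpleGraph.Walk.length_cons]
        omega
  obtain ⟨w, hw⟩ := up (D x) x le_rfl
  have hreach : G.Reachable x t := ⟨w⟩
  refine ⟨hreach, le_antisymm (le_trans (SimpleGraph.dist_le w) hw) ?_⟩
  obtain ⟨w', hw'⟩ := hreach.exists_walk_length_eq_dist
  have := low_aux lip w'
  rw [h0] at this
  omega

/-! ## Side of an edge in a tree -/

/-- `onSide G p q x` : `x` lies on the `p`-side of the edge `{p,q}`. -/
def onSide (G : SimpleGraph V) (p q x : V) : Prop :=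
  (G.deleteEdges {s(p,q)}).Reachable x p

lemma onSide_self (G : SimpleGraph V) (p q : V) : onSide G p q p := Reachable.refl _

lemma deleteEdges_comm_pair (G : SimpleGraph V) (p q : V) :
    G.deleteEdges {s(p,q)} = G.deleteEdges {s(q,p)} := by
  rw [Sym2.eq_swap]

lemma not_reachable_delete_of_adj {G : SimpleGraph V} (hG : G.IsAcyclic) {p q : V}
    (hpq : G.Adj p q) : ¬ (G.deleteEdges {s(p,q)}).Reachable p q := by
  intro hr
  obtain ⟨w0, hw0, _⟩ := exists_geodesic hr
  have hsub : ∀ e ∈ w0.edges, e ∈ G.edgeSet := by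
    intro e he
    have := w0.edges_subset_edgeSet he
    rw [SimpleGraph.edgeSet_deleteEdges] at this
    exact this.1
  have hnot : s(p,q) ∉ w0.edges := by
    intro hmem
    have := w0.edges_subset_edgeSet hmem
    rw [SimpleGraph.edgeSet_deleteEdges] at this
    simp at this
  let w1 := w0.transfer G hsub
  have hw1path : w1.IsPath := by
    rw [SimpleGraph.Walk.isPath_def, SimpleGraph.Walk.support_transfer]
    exact hw0.support_nodup
  have hw2path : (SimpleGraph.Walk.cons hpq SimpleGraph.Walk.nil).IsPath := by
    simp [SimpleGraph.Walk.isPath_def, hpq.ne]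
  have hPeq := SimpleGraph.isAcyclic_iff_path_unique.mp hG ⟨w1, hw1path⟩ ⟨_, hw2path⟩
  have hval : w1 = SimpleGraph.Walk.cons hpq SimpleGraph.Walk.nil := congrArg Subtype.val hPeq
  have : s(p,q) ∈ w0.edges := by
    have h1 : s(p,q) ∈ w1.edges := by rw [hval]; simp
    rwa [SimpleGraph.Walk.edges_transfer] at h1
  exact hnot this

private lemma onSide_total_aux {G : SimpleGraph V} (p q : V) :
    ∀ {x y : V} (_ : G.Walk x y), (onSide G p q y ∨ onSide G q p y) →
      (onSide G p q x ∨ onSide G q p x) := by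
  intro x y w
  induction w with
  | nil => exact id
  | cons h w ih =>
    intro hy
    have hp : ∀ {x : V}, x = p → onSide G p q x ∨ onSide G q p x :=
      fun h => Or.inl (h ▸ onSide_self G p q)
    have hq : ∀ {x : V}, x = q → onSide G p q x ∨ onSide G q p x :=
      fun h => Or.inr (h ▸ onSide_self G q p)
    rcases ih hy with hz | hz
    · rename_i u z _
      by_cases he : s(u,z) = s(p,q)
      · rw [Sym2.eq_iff] at he
        rcases he with ⟨h1, _⟩ | ⟨h1, _⟩
        · exact hp h1
        · exact hq h1
      · have hadj : (G.deleteEdges {s(p,q)}).Adj u z := by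
          rw [SimpleGraph.deleteEdges_adj]; exact ⟨h, by simpa using he⟩
        exact Or.inl (hadj.reachable.trans hz)
    · rename_i u z _
      by_cases he : s(u,z) = s(p,q)
      · rw [Sym2.eq_iff] at he
        rcases he with ⟨h1, _⟩ | ⟨h1, _⟩
        · exact hp h1
        · exact hq h1
      · have hadj : (G.deleteEdges {s(q,p)}).Adj u z := by
          rw [SimpleGraph.deleteEdges_adj]
          refine ⟨h, ?_⟩
          simp only [Set.mem_singleton_iff]
          rw [Sym2.eq_swap (a := q)]
          simpa using he
        exact Or.inr (hadj.reachable.trans hz)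

lemma onSide_total {G : SimpleGraph V} (hc : G.Connected) (p q x : V) :
    onSide G p q x ∨ onSide G q p x := by
  obtain ⟨w⟩ := hc x p
  exact onSide_total_aux p q w (Or.inl (onSide_self G p q))

lemma onSide_disj {G : SimpleGraph V} (hG : G.IsAcyclic) {p q x : V} (hpq : G.Adj p q)
    (h1 : onSide G p q x) (h2 : onSide G q p x) : False := by
  rw [onSide, deleteEdges_comm_pair] at h1
  exact not_reachable_delete_of_adj hG hpq
    (by rw [deleteEdges_comm_pair]; exact h1.symm.trans h2)

lemma onSide_of_adj {G : SimpleGraph V} {p q x y : V}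
    (hxy : G.Adj x y) (hne : s(x,y) ≠ s(p,q)) (hy : onSide G p q y) : onSide G p q x := by
  have hadj : (G.deleteEdges {s(p,q)}).Adj x y := by
    rw [SimpleGraph.deleteEdges_adj]; exact ⟨hxy, by simpa using hne⟩
  exact hadj.reachable.trans hy

/-- the only edge between the two sides is `{p,q}` itself -/
lemma onlyCross {G : SimpleGraph V} (hG : G.IsAcyclic) {p q u v : V} (hpq : G.Adj p q)
    (hu : onSide G p q u) (hv : onSide G q p v) (huv : G.Adj u v) : u = p ∧ v = q := by
  by_cases he : s(u,v) = s(p,q)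
  · rw [Sym2.eq_iff] at he
    rcases he with ⟨h1, h2⟩ | ⟨h1, h2⟩
    · exact ⟨h1, h2⟩
    · exact absurd (h1 ▸ hu) (fun hh => onSide_disj hG hpq hh (onSide_self G q p))
  · have := onSide_of_adj huv.symm (by rw [Sym2.eq_swap (a := v)]; exact he) hu
    exact absurd this (fun h => onSide_disj hG hpq h hv)

private lemma crossWalk_aux {G : SimpleGraph V} (hG : G.IsAcyclic) (hc : G.Connected)
    {p q : V} (hpq : G.Adj p q) :
    ∀ {x y : V} (w : G.Walk x y), onSide G p q x → onSide G q p y →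
      ∃ (w1 : G.Walk x p) (w2 : G.Walk q y), w1.length + 1 + w2.length = w.length := by
  intro x y w
  induction w with
  | nil => exact fun hx hy => absurd hx (fun h => onSide_disj hG hpq h hy)
  | cons h w ih =>
    intro hx hy
    rename_i u z _
    rcases onSide_total hc p q z with hz | hz
    · obtain ⟨w1, w2, hl⟩ := ih hz hy
      refine ⟨SimpleGraph.Walk.cons h w1, w2, ?_⟩
      simp only [SimpleGraph.Walk.length_cons]
      omega
    · obtain ⟨h1, h2⟩ := onlyCross hG hpq hx hz h
      refine ⟨(SimpleGraph.Walk.nil' p).copy h1.symm rfl, w.copy h2 rfl, ?_⟩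
      simp only [SimpleGraph.Walk.length_copy, SimpleGraph.Walk.length_nil,
        SimpleGraph.Walk.length_cons]
      omega

lemma crossWalk {G : SimpleGraph V} (hG : G.IsAcyclic) (hc : G.Connected) {p q x y : V}
    (hpq : G.Adj p q) (w : G.Walk x y) (hx : onSide G p q x) (hy : onSide G q p y) :
    ∃ (w1 : G.Walk x p) (w2 : G.Walk q y), w1.length + 1 + w2.length = w.length :=
  crossWalk_aux hG hc hpq w hx hy

lemma crossDist {G : SimpleGraph V} (hG : G.IsTree) {p q x y : V}
    (hpq : G.Adj p q) (hx : onSide G p q x) (hy : onSide G q p y) :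
    G.dist x y = G.dist x p + 1 + G.dist q y := by
  have hc := hG.isConnected
  obtain ⟨w, hwp, hwl⟩ := exists_geodesic (hc x y)
  obtain ⟨w1, w2, hl⟩ := crossWalk hG.IsAcyclic hc hpq w hx hy
  have h1 : G.dist x p ≤ w1.length := SimpleGraph.dist_le _
  have h2 : G.dist q y ≤ w2.length := SimpleGraph.dist_le _
  have hup : G.dist x y ≤ G.dist x p + 1 + G.dist q y := by
    obtain ⟨g1, _, e1⟩ := exists_geodesic (hc x p)
    obtain ⟨g2, _, e2⟩ := exists_geodesic (hc q y)
    calc G.dist x y ≤ ((g1.append (SimpleGraph.Walk.cons hpq SimpleGraph.Walk.nil)).append g2).length :=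
          SimpleGraph.dist_le _
      _ = G.dist x p + 1 + G.dist q y := by
          simp [SimpleGraph.Walk.length_append, e1, e2]
  omega

/-- distance to the two endpoints from a side -/
lemma sideDistSucc {G : SimpleGraph V} (hG : G.IsTree) {p q x : V}
    (hpq : G.Adj p q) (hx : onSide G p q x) : G.dist x q = G.dist x p + 1 := by
  have h := crossDist hG hpq hx (onSide_self G q p)
  rwa [SimpleGraph.dist_self, Nat.add_zero] at h

/-- a geodesic between two vertices on the `q`-side avoids `p` -/
lemma geodesic_avoids {G : SimpleGraph V} (hG : G.IsTree) {p q x y : V}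
    (hpq : G.Adj p q) (hx : onSide G q p x) (hy : onSide G q p y)
    {w : G.Walk x y} (hwl : w.length = G.dist x y) : p ∉ w.support := by
  intro hp
  have hc := hG.isConnected
  obtain ⟨hsum, h1, h2⟩ := dist_split hwl hp
  have e1 : G.dist x p = G.dist x q + 1 := sideDistSucc hG hpq.symm hx
  have e2 : G.dist p y = G.dist y q + 1 := by
    rw [SimpleGraph.dist_comm]
    exact sideDistSucc hG hpq.symm hy
  have tri : G.dist x y ≤ G.dist x q + G.dist q y := hc.dist_triangle
  have hcy : G.dist q y = G.dist y q := SimpleGraph.dist_comm ..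
  omega

end Stmt13Aux


/-- decomposing a cycle at its base point -/
lemma cycle_decomp {G : SimpleGraph V} {u : V} {c : G.Walk u u} (hc : c.IsCycle) :
    ∃ (x y : V) (hux : G.Adj u x) (w : G.Walk x y) (hyu : G.Adj y u),
      u ∉ w.support ∧ x ≠ y ∧ c.edges = s(u,x) :: (w.edges ++ [s(y,u)]) := by
  cases c with
  | nil => exact absurd rfl ((SimpleGraph.Walk.isCycle_def _).mp hc).2.1
  | @cons _ xx _ hux p =>
    rcases hr : p.reverse with _ | @⟨_, yy, _, h2, q⟩
    case nil =>
      have hp : p = (SimpleGraph.Walk.nil : G.Walk u u).reverse := by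
        rw [← hr, SimpleGraph.Walk.reverse_reverse]
      have h3 := hc.three_le_length
      rw [hp] at h3
      simp at h3
    case cons =>
      have hp : p = (q.reverse).concat h2.symm := by
        rw [SimpleGraph.Walk.concat_eq_append, ← SimpleGraph.Walk.reverse_cons, ← hr,
          SimpleGraph.Walk.reverse_reverse]
        exact h2
      have hsupp : p.support = (q.reverse).support ++ [u] := by
        rw [hp, SimpleGraph.Walk.support_concat]
      have hedges : p.edges = (q.reverse).edges ++ [s(yy, u)] := by
        rw [hp, SimpleGraph.Walk.edges_concat, List.concat_eq_append]
      have htail : (SimpleGraph.Walk.cons hux p).support.tail.Nodup :=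
        ((SimpleGraph.Walk.isCycle_def _).mp hc).2.2
      rw [SimpleGraph.Walk.support_cons, List.tail_cons, hsupp] at htail
      have hnotin : u ∉ (q.reverse).support := by
        intro hmem
        have := List.disjoint_of_nodup_append htail
        exact this hmem (by simp)
      have hxy : xx ≠ yy := by
        intro hxy
        have htrail := ((SimpleGraph.Walk.isCycle_def _).mp hc).1
        have hnodup := htrail.edges_nodup
        rw [SimpleGraph.Walk.edges_cons, hedges] at hnodup
        rw [List.nodup_cons] at hnodup
        refine hnodup.1 ?_
        rw [List.mem_append]
        refine Or.inr ?_
        simp [hxy, Sym2.eq_swap]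
      refine ⟨xx, yy, hux, q.reverse, h2.symm, hnotin, hxy, ?_⟩
      rw [SimpleGraph.Walk.edges_cons, hedges]


section EccHelpers

variable [Fintype V]

lemma ecc_le {G : SimpleGraph V} {x : V} {n : ℕ} (h : ∀ y, G.dist x y ≤ n) : ecc G x ≤ n :=
  Finset.sup_le fun y _ => h y

lemma dist_le_ecc (G : SimpleGraph V) (x y : V) : G.dist x y ≤ ecc G x :=
  Finset.le_sup (Finset.mem_univ y)

lemma exists_ecc_witness [Nonempty V] (G : SimpleGraph V) (x : V) :
    ∃ y, ecc G x = G.dist x y := by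
  obtain ⟨y, -, hy⟩ := Finset.exists_mem_eq_sup Finset.univ Finset.univ_nonempty
    (fun u => G.dist x u)
  exact ⟨y, hy⟩

end EccHelpers

/-! ## The exchange construction -/

namespace Stmt13Aux

section Exchange

variable {T : SimpleGraph V} {vst a b x0 : V}

/-- basic distance facts -/
lemma dist_adj {G : SimpleGraph V} (hc : G.Connected) {x y : V} (h : G.Adj x y) :
    G.dist x y = 1 := SimpleGraph.dist_eq_one_iff_adj.mpr h

lemma dist_lip {G : SimpleGraph V} (hc : G.Connected) {x y t : V} (h : G.Adj x y) :
    G.dist x t ≤ G.dist y t + 1 := by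
  have := hc.dist_triangle (u := x) (v := y) (w := t)
  rw [dist_adj hc h] at this
  omega

lemma dist_step {G : SimpleGraph V} (hc : G.Connected) {x t : V} (h : x ≠ t) :
    ∃ y, G.Adj x y ∧ G.dist y t + 1 = G.dist x t := by
  obtain ⟨w, hw⟩ := (hc x t).exists_walk_length_eq_dist
  cases w with
  | nil => exact absurd rfl h
  | cons hadj w' =>
    refine ⟨_, hadj, ?_⟩
    have h1 : G.dist _ t ≤ w'.length := SimpleGraph.dist_le _
    have h2 : G.dist x t ≤ G.dist _ t + 1 := dist_lip hc hadj
    simp only [SimpleGraph.Walk.length_cons] at hw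
    omega

/-- The configuration for the branch exchange: `v*` has two neighbours `a`, `b`, each
having a further neighbour, and the side of `v*` away from both `a` and `b` contains
a vertex `x0` at maximal distance from `v*`. -/
structure Cfg (T : SimpleGraph V) (vst a b x0 : V) : Prop where
  tree : T.IsTree
  ha : T.Adj vst a
  hb : T.Adj vst b
  hab : a ≠ b
  hca : ∃ c, T.Adj a c ∧ c ≠ vst
  hcb : ∃ c, T.Adj b c ∧ c ≠ vst
  hx0a : ¬ onSide T a vst x0
  hx0b : ¬ onSide T b vst x0
  hx0max : ∀ y, T.dist vst y ≤ T.dist vst x0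

namespace Cfg

variable (cfg : Cfg T vst a b x0)
include cfg

lemma hc : T.Connected := cfg.tree.isConnected

lemma hanv : a ≠ vst := cfg.ha.ne'
lemma hbnv : b ≠ vst := cfg.hb.ne'

lemma hnadj : ¬ T.Adj a b := by
  intro h
  have p1 : (SimpleGraph.Walk.cons h SimpleGraph.Walk.nil).IsPath := by
    simp [SimpleGraph.Walk.isPath_def, h.ne]
  have p2 : (SimpleGraph.Walk.cons cfg.ha.symm
      (SimpleGraph.Walk.cons cfg.hb SimpleGraph.Walk.nil)).IsPath := by
    rw [SimpleGraph.Walk.isPath_def]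
    simp only [SimpleGraph.Walk.support_cons, SimpleGraph.Walk.support_nil]
    refine List.nodup_cons.mpr ⟨?_, List.nodup_cons.mpr ⟨?_, List.nodup_singleton _⟩⟩
    · intro hmem
      simp only [List.mem_cons, List.mem_singleton] at hmem
      rcases hmem with h1 | h1 | h1
      · exact cfg.hanv h1
      · exact cfg.hab h1
      · simp at h1
    · intro hmem
      simp only [List.mem_cons, List.mem_singleton] at hmem
      rcases hmem with h1 | h1
      · exact cfg.hbnv h1.symm
      · simp at h1
  have := SimpleGraph.isAcyclic_iff_path_unique.mp cfg.tree.IsAcyclic ⟨_, p1⟩ ⟨_, p2⟩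
  have hval := congrArg (fun r => (Subtype.val r).length) this
  simp at hval

end Cfg


/-- the swap of `a` and `b` -/
noncomputable def swAB (a b : V) : V → V := fun z =>
  if z = a then b else if z = b then a else z

/-- the moved children of `b` -/
def CbSet (T : SimpleGraph V) (vst a b : V) : Set V := {c | T.Adj b c ∧ c ≠ vst ∧ c ≠ a}

/-- the modified tree: children of `b` are re-attached to `a` -/
def Tm (T : SimpleGraph V) (vst a b : V) : SimpleGraph V where
  Adj x y := (T.Adj x y ∧ ¬(x = b ∧ y ∈ CbSet T vst a b) ∧ ¬(y = b ∧ x ∈ CbSet T vst a b)) ∨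
    (x = a ∧ y ∈ CbSet T vst a b) ∨ (y = a ∧ x ∈ CbSet T vst a b)
  symm := by
    refine ⟨fun x y h => ?_⟩
    rcases h with ⟨h1, h2, h3⟩ | h | h
    · exact Or.inl ⟨h1.symm, h3, h2⟩
    · exact Or.inr (Or.inr h)
    · exact Or.inr (Or.inl h)
  loopless := by
    refine ⟨fun x h => ?_⟩
    rcases h with ⟨h1, _, _⟩ | ⟨rfl, _, _, hh⟩ | ⟨rfl, _, _, hh⟩ <;>
      first | exact T.loopless.irrefl x h1 | exact hh rfl

namespace Cfg

variable (cfg : Cfg T vst a b x0)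
include cfg

lemma CbSet_eq : CbSet T vst a b = {c | T.Adj b c ∧ c ≠ vst} := by
  ext c
  simp only [CbSet, Set.mem_setOf_eq, and_congr_right_iff]
  intro h
  constructor
  · exact fun hh => hh.1
  · intro h1
    refine ⟨h1, fun hca => cfg.hnadj (hca ▸ h).symm⟩

lemma mem_Cb_of (c : V) (h1 : T.Adj b c) (h2 : c ≠ vst) : c ∈ CbSet T vst a b := by
  rw [cfg.CbSet_eq]; exact ⟨h1, h2⟩

lemma Cb_side {c : V} (h : c ∈ CbSet T vst a b) : onSide T b vst c ∧ c ≠ b := by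
  refine ⟨?_, h.1.ne'⟩
  refine onSide_of_adj h.1.symm ?_ (onSide_self T b vst)
  simp only [ne_eq, Sym2.eq_iff]
  rintro (⟨h1, _⟩ | ⟨h1, _⟩)
  · exact h.1.ne h1.symm
  · exact h.2.1 h1

lemma a_side_vst : onSide T vst b a := by
  refine onSide_of_adj cfg.ha.symm ?_ (onSide_self T vst b)
  simp only [ne_eq, Sym2.eq_iff]
  rintro (⟨h1, _⟩ | ⟨h1, _⟩)
  · exact cfg.hanv h1
  · exact cfg.hab h1

lemma b_side_vst : onSide T vst a b := by
  refine onSide_of_adj cfg.hb.symm ?_ (onSide_self T vst a)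
  simp only [ne_eq, Sym2.eq_iff]
  rintro (⟨h1, _⟩ | ⟨h1, _⟩)
  · exact cfg.hbnv h1
  · exact cfg.hab h1.symm

/-- `x` on the `a`-side has `dist x vst = dist x a + 1`, and so on -/
lemma distSa {x : V} (h : onSide T a vst x) : T.dist x vst = T.dist x a + 1 :=
  sideDistSucc cfg.tree cfg.ha.symm h

lemma distSb {x : V} (h : onSide T b vst x) : T.dist x vst = T.dist x b + 1 :=
  sideDistSucc cfg.tree cfg.hb.symm h

lemma dist_b_of_Sa {x : V} (h : onSide T a vst x) : T.dist x b = T.dist x a + 2 := by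
  have := crossDist cfg.tree cfg.ha.symm h cfg.b_side_vst
  rw [dist_adj cfg.hc cfg.hb] at this
  omega

lemma dist_a_of_Sb {x : V} (h : onSide T b vst x) : T.dist x a = T.dist x b + 2 := by
  have := crossDist cfg.tree cfg.hb.symm h cfg.a_side_vst
  rw [dist_adj cfg.hc cfg.ha] at this
  omega

lemma side_disj {x : V} (h1 : onSide T a vst x) (h2 : onSide T b vst x) : False := by
  have e1 := cfg.dist_b_of_Sa h1
  have e2 := cfg.dist_a_of_Sb h2
  omega

lemma dist_ab : T.dist a b = 2 := by
  have := cfg.dist_b_of_Sa (onSide_self T a vst)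
  rwa [SimpleGraph.dist_self, Nat.zero_add] at this

/-- distance from a vertex not on the `a` side to `a` -/
lemma dist_a_out {x : V} (h : ¬ onSide T a vst x) : T.dist x a = T.dist x vst + 1 := by
  rcases onSide_total cfg.hc a vst x with h' | h'
  · exact absurd h' h
  · exact sideDistSucc cfg.tree cfg.ha h'

lemma dist_b_out {x : V} (h : ¬ onSide T b vst x) : T.dist x b = T.dist x vst + 1 := by
  rcases onSide_total cfg.hc b vst x with h' | h'
  · exact absurd h' h
  · exact sideDistSucc cfg.tree cfg.hb h'

/-- crossing distances -/
lemma dist_cross_b {x y : V} (hx : onSide T b vst x) (hy : ¬ onSide T b vst y) :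
    T.dist x y = T.dist x b + 1 + T.dist vst y := by
  rcases onSide_total cfg.hc b vst y with h' | h'
  · exact absurd h' hy
  · exact crossDist cfg.tree cfg.hb.symm hx h'

lemma dist_cross_a {x y : V} (hx : onSide T a vst x) (hy : ¬ onSide T a vst y) :
    T.dist x y = T.dist x a + 1 + T.dist vst y := by
  rcases onSide_total cfg.hc a vst y with h' | h'
  · exact absurd h' hy
  · exact crossDist cfg.tree cfg.ha.symm hx h'

/-! basic side facts -/

lemma vst_not_Sb : ¬ onSide T b vst vst :=
  fun h => onSide_disj cfg.tree.IsAcyclic cfg.hb.symm h (onSide_self T vst b)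

lemma vst_not_Sa : ¬ onSide T a vst vst :=
  fun h => onSide_disj cfg.tree.IsAcyclic cfg.ha.symm h (onSide_self T vst a)

lemma a_not_Sb : ¬ onSide T b vst a := fun h => cfg.side_disj (onSide_self T a vst) h

lemma b_not_Sa : ¬ onSide T a vst b := fun h => cfg.side_disj h (onSide_self T b vst)

lemma dist_a_vst : T.dist a vst = 1 := dist_adj cfg.hc cfg.ha.symm

lemma dist_b_vst : T.dist b vst = 1 := dist_adj cfg.hc cfg.hb.symm

lemma dist_vst_a : T.dist vst a = 1 := dist_adj cfg.hc cfg.ha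

lemma dist_vst_b : T.dist vst b = 1 := dist_adj cfg.hc cfg.hb

lemma Cb_dist {c : V} (h : c ∈ CbSet T vst a b) : T.dist c b = 1 ∧ T.dist c vst = 2 := by
  have h1 : T.dist c b = 1 := dist_adj cfg.hc h.1.symm
  have h2 := cfg.distSb (cfg.Cb_side h).1
  omega

lemma T_nbr_b {y : V} (h : T.Adj b y) : y = vst ∨ y ∈ CbSet T vst a b := by
  by_cases hv : y = vst
  · exact Or.inl hv
  · refine Or.inr (cfg.mem_Cb_of y h hv)

lemma cross_b {x y : V} (h : T.Adj x y) (hx : onSide T b vst x) (hy : ¬ onSide T b vst y) :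
    x = b ∧ y = vst := by
  rcases onSide_total cfg.hc b vst y with h' | h'
  · exact absurd h' hy
  · exact onlyCross cfg.tree.IsAcyclic cfg.hb.symm hx h' h

lemma cross_a {x y : V} (h : T.Adj x y) (hx : onSide T a vst x) (hy : ¬ onSide T a vst y) :
    x = a ∧ y = vst := by
  rcases onSide_total cfg.hc a vst y with h' | h'
  · exact absurd h' hy
  · exact onlyCross cfg.tree.IsAcyclic cfg.ha.symm hx h' h

lemma Sb_dist_ge_two {x : V} (hx : onSide T b vst x) (hxb : x ≠ b)
    (hxc : x ∉ CbSet T vst a b) : 2 ≤ T.dist x b := by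
  have h1 : 1 ≤ T.dist x b := (cfg.hc.pos_dist_of_ne hxb)
  rcases Nat.lt_or_ge (T.dist x b) 2 with h | h
  · have : T.dist x b = 1 := by omega
    have hadj : T.Adj x b := SimpleGraph.dist_eq_one_iff_adj.mp this
    rcases cfg.T_nbr_b hadj.symm with h' | h'
    · exact absurd (h' ▸ hx) cfg.vst_not_Sb
    · exact absurd h' hxc
  · exact h

/-! ### adjacency in the modified graph -/

lemma Tm_adj_kept {x y : V} (h : T.Adj x y) (h1 : ¬(x = b ∧ y ∈ CbSet T vst a b))
    (h2 : ¬(y = b ∧ x ∈ CbSet T vst a b)) : (Tm T vst a b).Adj x y :=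
  Or.inl ⟨h, h1, h2⟩

lemma Tm_adj_kept' {x y : V} (h : T.Adj x y) (h1 : x ≠ b) (h2 : y ≠ b) :
    (Tm T vst a b).Adj x y :=
  Or.inl ⟨h, fun hh => h1 hh.1, fun hh => h2 hh.1⟩

lemma Tm_adj_new {c : V} (h : c ∈ CbSet T vst a b) : (Tm T vst a b).Adj a c :=
  Or.inr (Or.inl ⟨rfl, h⟩)

lemma Tm_adj_bvst : (Tm T vst a b).Adj b vst := by
  refine cfg.Tm_adj_kept cfg.hb.symm ?_ ?_
  · rintro ⟨-, hv⟩; exact hv.2.1 rfl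
  · rintro ⟨hv, -⟩; exact cfg.hbnv hv.symm

lemma Tm_nbr_b {y : V} (h : (Tm T vst a b).Adj b y) : y = vst := by
  rcases h with ⟨h1, h2, h3⟩ | ⟨h1, h2⟩ | ⟨h1, h2⟩
  · rcases cfg.T_nbr_b h1 with h' | h'
    · exact h'
    · exact absurd ⟨rfl, h'⟩ h2
  · exact absurd h1.symm cfg.hab
  · exact absurd h2.1 (T.loopless.irrefl b)

/-! anchors -/

lemma anchor_vst (x : V) :
    (Tm T vst a b).Reachable x vst ∧ (Tm T vst a b).dist x vst = T.dist x vst := by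
  refine dist_eq_of_witness (G := Tm T vst a b) (fun x => T.dist x vst)
    (SimpleGraph.dist_self) ?_ ?_ x
  · intro x y h
    beta_reduce
    rcases h with ⟨h1, -, -⟩ | ⟨hxa, hc'⟩ | ⟨hya, hc'⟩
    · exact dist_lip cfg.hc h1
    · subst hxa
      have := (cfg.Cb_dist hc').2
      rw [cfg.dist_a_vst]; omega
    · subst hya
      have := (cfg.Cb_dist hc').2
      rw [this, cfg.dist_a_vst]
  · intro x hx
    beta_reduce
    by_cases hxb : x = b
    · subst hxb
      exact ⟨vst, cfg.Tm_adj_bvst, by rw [SimpleGraph.dist_self, cfg.dist_b_vst]⟩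
    by_cases hxc : x ∈ CbSet T vst a b
    · refine ⟨a, (cfg.Tm_adj_new hxc).symm, ?_⟩
      rw [cfg.dist_a_vst, (cfg.Cb_dist hxc).2]
    · obtain ⟨y, hadj, hy⟩ := dist_step cfg.hc hx
      refine ⟨y, cfg.Tm_adj_kept hadj (fun hh => hxb hh.1) (fun hh => hxc hh.2), hy⟩

lemma Tm_conn : (Tm T vst a b).Connected := by
  rw [SimpleGraph.connected_iff_exists_forall_reachable]
  exact ⟨vst, fun w => (cfg.anchor_vst w).1.symm⟩

lemma anchor_b (x : V) :
    (Tm T vst a b).dist x b = if x = b then 0 else T.dist x vst + 1 := by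
  refine (dist_eq_of_witness (G := Tm T vst a b)
    (fun x => if x = b then 0 else T.dist x vst + 1) (by simp) ?_ ?_ x).2
  · intro x y h
    beta_reduce
    by_cases hxb : x = b
    · simp [hxb]
    by_cases hyb : y = b
    · subst hyb
      have hxv := cfg.Tm_nbr_b h.symm
      subst hxv
      simp [SimpleGraph.dist_self, cfg.hbnv.symm]
    rw [if_neg hxb, if_neg hyb]
    rcases h with ⟨h1, -, -⟩ | ⟨hxa, hc'⟩ | ⟨hya, hc'⟩
    · have := dist_lip cfg.hc h1 (t := vst); omega
    · subst hxa
      have := (cfg.Cb_dist hc').2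
      rw [cfg.dist_a_vst]; omega
    · subst hya
      have := (cfg.Cb_dist hc').2
      rw [this, cfg.dist_a_vst]
  · intro x hx
    beta_reduce
    by_cases hxv : x = vst
    · subst hxv
      refine ⟨b, cfg.Tm_adj_bvst.symm, ?_⟩
      simp [hx]
    by_cases hxc : x ∈ CbSet T vst a b
    · refine ⟨a, (cfg.Tm_adj_new hxc).symm, ?_⟩
      rw [if_neg (cfg.hab : a ≠ b), if_neg hx, cfg.dist_a_vst, (cfg.Cb_dist hxc).2]
    · obtain ⟨y, hadj, hy⟩ := dist_step cfg.hc hxv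
      have hyb : y ≠ b := by
        intro hyb
        subst hyb
        rcases cfg.T_nbr_b hadj.symm with h' | h'
        · exact hxv h'
        · exact hxc h'
      refine ⟨y, cfg.Tm_adj_kept' hadj hx hyb, ?_⟩
      rw [if_neg hyb, if_neg hx]
      omega

lemma anchor_a (x : V) :
    (Tm T vst a b).dist x a =
      if onSide T b vst x then (if x = b then 2 else T.dist x b) else T.dist x a := by
  refine (dist_eq_of_witness (G := Tm T vst a b)
    (fun x => if onSide T b vst x then (if x = b then 2 else T.dist x b) else T.dist x a)
    (by beta_reduce; rw [if_neg cfg.a_not_Sb, SimpleGraph.dist_self]) ?_ ?_ x).2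
  · intro x y h
    beta_reduce
    rcases h with ⟨h1, h2, h3⟩ | ⟨hxa, hc'⟩ | ⟨hya, hc'⟩
    · by_cases hx : onSide T b vst x <;> by_cases hy : onSide T b vst y
      · have hxb : x ≠ b := by
          rintro rfl
          rcases cfg.T_nbr_b h1 with h' | h'
          · subst h'; exact cfg.vst_not_Sb hy
          · exact h2 ⟨rfl, h'⟩
        have hyb : y ≠ b := by
          rintro rfl
          rcases cfg.T_nbr_b h1.symm with h' | h'
          · subst h'; exact cfg.vst_not_Sb hx
          · exact h3 ⟨rfl, h'⟩
        rw [if_pos hx, if_pos hy, if_neg hxb, if_neg hyb]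
        exact dist_lip cfg.hc h1
      · obtain ⟨hxb, hyv⟩ := cfg.cross_b h1 hx hy
        subst hxb; subst hyv
        rw [if_pos hx, if_neg hy, if_pos rfl, cfg.dist_vst_a]
      · obtain ⟨hyb, hxv⟩ := cfg.cross_b h1.symm hy hx
        subst hyb; subst hxv
        rw [if_neg hx, if_pos hy, if_pos rfl, cfg.dist_vst_a]
        omega
      · rw [if_neg hx, if_neg hy]
        exact dist_lip cfg.hc h1
    · subst hxa
      rw [if_neg cfg.a_not_Sb, SimpleGraph.dist_self]
      omega
    · subst hya
      have hcb := cfg.Cb_side hc'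
      rw [if_pos hcb.1, if_neg hcb.2, (cfg.Cb_dist hc').1, if_neg cfg.a_not_Sb,
        SimpleGraph.dist_self]
  · intro x hx
    beta_reduce
    by_cases hxb : x = b
    · refine ⟨vst, ?_, ?_⟩
      · rw [hxb]; exact cfg.Tm_adj_bvst
      · rw [hxb, if_neg cfg.vst_not_Sb, cfg.dist_vst_a,
          if_pos (onSide_self T b vst), if_pos rfl]
    by_cases hxc : x ∈ CbSet T vst a b
    · refine ⟨a, (cfg.Tm_adj_new hxc).symm, ?_⟩
      rw [if_neg cfg.a_not_Sb, SimpleGraph.dist_self,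
        if_pos (cfg.Cb_side hxc).1, if_neg (cfg.Cb_side hxc).2, (cfg.Cb_dist hxc).1]
    by_cases hxs : onSide T b vst x
    · have h2 := cfg.Sb_dist_ge_two hxs hxb hxc
      obtain ⟨y, hadj, hy⟩ := dist_step cfg.hc hxb
      have hys : onSide T b vst y := by
        by_contra hys
        obtain ⟨hxb', -⟩ := cfg.cross_b hadj hxs hys
        exact hxb hxb'
      have hyb : y ≠ b := by
        intro hyb
        subst hyb
        rw [SimpleGraph.dist_self] at hy
        omega
      refine ⟨y, cfg.Tm_adj_kept' hadj hxb hyb, ?_⟩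
      rw [if_pos hys, if_neg hyb, if_pos hxs, if_neg hxb]
      omega
    · obtain ⟨y, hadj, hy⟩ := dist_step cfg.hc hx
      have hys : ¬ onSide T b vst y := by
        intro hys
        obtain ⟨hyb', hxv'⟩ := cfg.cross_b hadj.symm hys hxs
        subst hyb'; subst hxv'
        rw [SimpleGraph.dist_comm, cfg.dist_ab, cfg.dist_vst_a] at hy
        omega
      have hyb : y ≠ b := fun hh => hys (hh ▸ onSide_self T b vst)
      refine ⟨y, cfg.Tm_adj_kept' hadj hxb hyb, ?_⟩
      rw [if_neg hys, if_neg hxs]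
      omega


/-! ### acyclicity of the modified graph -/

lemma Cb_ne_a {c : V} (h : c ∈ CbSet T vst a b) : c ≠ a := h.2.2

lemma a_notin_Cb : a ∉ CbSet T vst a b := fun h => h.2.2 rfl

lemma b_notin_Cb : b ∉ CbSet T vst a b := fun h => h.1.ne rfl

lemma vst_notin_Cb : vst ∉ CbSet T vst a b := fun h => h.2.1 rfl

lemma Cb_not_T_adj_a {c : V} (h : c ∈ CbSet T vst a b) : ¬ T.Adj a c := by
  intro hadj
  obtain ⟨hcb, -⟩ := cfg.cross_b hadj.symm (cfg.Cb_side h).1 cfg.a_not_Sb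
  exact (cfg.Cb_side h).2 hcb

lemma Tm_adj_cases {x y : V} (h : (Tm T vst a b).Adj x y) :
    T.Adj x y ∨ (x = a ∧ y ∈ CbSet T vst a b) ∨ (y = a ∧ x ∈ CbSet T vst a b) := by
  rcases h with ⟨h1, -, -⟩ | h | h
  · exact Or.inl h1
  · exact Or.inr (Or.inl h)
  · exact Or.inr (Or.inr h)

lemma Tm_adj_not_new {x y : V} (h : (Tm T vst a b).Adj x y) (hx : x ≠ a) (hy : y ≠ a) :
    T.Adj x y := by
  rcases cfg.Tm_adj_cases h with h | ⟨h1, -⟩ | ⟨h1, -⟩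
  · exact h
  · exact absurd h1 hx
  · exact absurd h1 hy

lemma Tm_adj_a_cases {y : V} (h : (Tm T vst a b).Adj a y) : T.Adj a y ∨ y ∈ CbSet T vst a b := by
  rcases cfg.Tm_adj_cases h with h | ⟨-, h2⟩ | ⟨h1, h2⟩
  · exact Or.inl h
  · exact Or.inr h2
  · exact absurd h2 (h1 ▸ cfg.a_notin_Cb)

lemma not_Tm_adj_Cb_b {c : V} (h : c ∈ CbSet T vst a b) : ¬ (Tm T vst a b).Adj c b := by
  intro hadj
  rcases hadj with ⟨-, -, h3⟩ | ⟨h1, -⟩ | ⟨h1, h2⟩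
  · exact h3 ⟨rfl, h⟩
  · exact (cfg.Cb_ne_a h) h1
  · exact cfg.hab h1.symm

/-- the `T`-path from `x ∈ Cb` to `b` -/
lemma path_xby {x y : V} (hx : x ∈ CbSet T vst a b) (hy : y ∈ CbSet T vst a b) (hxy : x ≠ y) :
    (SimpleGraph.Walk.cons hx.1.symm (SimpleGraph.Walk.cons hy.1
      (SimpleGraph.Walk.nil : T.Walk y y))).IsPath := by
  rw [SimpleGraph.Walk.isPath_def]
  simp only [SimpleGraph.Walk.support_cons, SimpleGraph.Walk.support_nil]
  refine List.nodup_cons.mpr ⟨?_, List.nodup_cons.mpr ⟨?_, List.nodup_singleton _⟩⟩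
  · simp only [List.mem_cons, List.not_mem_nil, List.mem_singleton]
    rintro (h1 | h1 | h1)
    · exact hx.1.ne h1.symm
    · exact hxy h1
    · exact h1.elim
  · simp only [List.mem_singleton]
    exact fun h1 => hy.1.ne h1

/-- the `T`-path `x → b → vst → a` for `x ∈ Cb` -/
lemma path_xbva {x : V} (hx : x ∈ CbSet T vst a b) :
    (SimpleGraph.Walk.cons hx.1.symm (SimpleGraph.Walk.cons cfg.hb.symm
      (SimpleGraph.Walk.cons cfg.ha (SimpleGraph.Walk.nil : T.Walk a a)))).IsPath := by
  rw [SimpleGraph.Walk.isPath_def]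
  simp only [SimpleGraph.Walk.support_cons, SimpleGraph.Walk.support_nil]
  refine List.nodup_cons.mpr ⟨?_, List.nodup_cons.mpr ⟨?_,
    List.nodup_cons.mpr ⟨?_, List.nodup_singleton _⟩⟩⟩
  · simp only [List.mem_cons, List.mem_singleton, List.not_mem_nil]
    rintro (h1 | h1 | h1 | h1)
    · exact hx.1.ne h1.symm
    · exact hx.2.1 h1
    · exact hx.2.2 h1
    · exact h1.elim
  · simp only [List.mem_cons, List.mem_singleton, List.not_mem_nil]
    rintro (h1 | h1 | h1)
    · exact cfg.hbnv h1
    · exact cfg.hab h1.symm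
    · exact h1.elim
  · simp only [List.mem_singleton]
    exact fun h1 => cfg.hanv h1.symm

lemma Tm_acyclic : (Tm T vst a b).IsAcyclic := by
  intro v c hc
  by_cases hav : a ∈ c.support
  case neg =>
    -- no vertex a, hence no new edges: transfer the cycle to T
    have hsub : ∀ e ∈ c.edges, e ∈ T.edgeSet := by
      intro e he
      induction e using Sym2.ind with
      | _ x y =>
        have hadj := c.adj_of_mem_edges he
        rw [SimpleGraph.mem_edgeSet]
        refine cfg.Tm_adj_not_new hadj ?_ ?_
        · rintro rfl; exact hav (c.fst_mem_support_of_mem_edges he)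
        · rintro rfl; exact hav (c.snd_mem_support_of_mem_edges he)
    exact cfg.tree.IsAcyclic (c.transfer T hsub) (hc.transfer hsub)
  case pos =>
    -- rotate the cycle to start at a and decompose
    have hc' := hc.rotate hav
    obtain ⟨x, y, hux, w, hyu, hnotin, hxy, hedges⟩ := cycle_decomp hc'
    -- the interior walk avoids a hence all its edges are T-edges
    have hwT : ∀ e ∈ w.edges, e ∈ T.edgeSet := by
      intro e he
      induction e using Sym2.ind with
      | _ x' y' =>
        have hadj := w.adj_of_mem_edges he
        rw [SimpleGraph.mem_edgeSet]
        refine cfg.Tm_adj_not_new hadj ?_ ?_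
        · rintro rfl; exact hnotin (w.fst_mem_support_of_mem_edges he)
        · rintro rfl; exact hnotin (w.snd_mem_support_of_mem_edges he)
    have hxa : x ≠ a := hux.ne'
    have hya : y ≠ a := hyu.ne
    -- transfer interior
    let wT := w.transfer T hwT
    have hwTedge : wT.edges = w.edges := w.edges_transfer hwT
    have hbypass_edges : wT.bypass.edges ⊆ w.edges := by
      rw [← hwTedge]; exact SimpleGraph.Walk.edges_bypass_subset wT
    have hbypass_support : a ∉ wT.bypass.support := by
      intro hmem
      refine hnotin ?_
      have h1 := SimpleGraph.Walk.support_bypass_subset wT hmem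
      rwa [SimpleGraph.Walk.support_transfer] at h1
    by_cases hxc : x ∈ CbSet T vst a b <;> by_cases hyc : y ∈ CbSet T vst a b
    · -- both ends in Cb: two T-paths from x to y
      have p2 := cfg.path_xby hxc hyc hxy
      have heq := SimpleGraph.isAcyclic_iff_path_unique.mp cfg.tree.IsAcyclic
        ⟨wT.bypass, SimpleGraph.Walk.bypass_isPath wT⟩ ⟨_, p2⟩
      have hval : wT.bypass = _ := congrArg Subtype.val heq
      have : s(x, b) ∈ wT.bypass.edges := by
        rw [hval]
        simp
      have hmem := hbypass_edges this
      have hadj : (Tm T vst a b).Adj x b := w.adj_of_mem_edges hmem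
      exact cfg.not_Tm_adj_Cb_b hxc hadj
    · -- x ∈ Cb, y ∉ Cb : y is T-adjacent to a
      have hyadj : T.Adj y a := by
        rcases cfg.Tm_adj_a_cases hyu.symm with h | h
        · exact h.symm
        · exact absurd h hyc
      have q1path : (wT.bypass.concat hyadj).IsPath := by
        rw [SimpleGraph.Walk.isPath_def, SimpleGraph.Walk.support_concat]
        rw [List.nodup_append]
        refine ⟨(SimpleGraph.Walk.bypass_isPath wT).support_nodup, List.nodup_singleton _, ?_⟩
        intro z hz w' hz' hzw; subst hzw
        rw [List.mem_singleton] at hz'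
        subst hz'
        exact hbypass_support hz
      have p2 := cfg.path_xbva hxc
      have heq := SimpleGraph.isAcyclic_iff_path_unique.mp cfg.tree.IsAcyclic
        ⟨_, q1path⟩ ⟨_, p2⟩
      have hval : wT.bypass.concat hyadj = _ := congrArg Subtype.val heq
      have hxb : s(x, b) ∈ (wT.bypass.concat hyadj).edges := by
        rw [hval]
        simp
      rw [SimpleGraph.Walk.edges_concat, List.concat_eq_append, List.mem_append] at hxb
      rcases hxb with hxb | hxb
      · have hmem := hbypass_edges hxb
        exact cfg.not_Tm_adj_Cb_b hxc (w.adj_of_mem_edges hmem)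
      · rw [List.mem_singleton, Sym2.eq_iff] at hxb
        rcases hxb with ⟨-, h2⟩ | ⟨h1, -⟩
        · exact cfg.hab h2.symm
        · exact hxa h1
    · -- y ∈ Cb, x ∉ Cb : x is T-adjacent to a (mirror case)
      have hxadj : T.Adj x a := by
        rcases cfg.Tm_adj_a_cases hux with h | h
        · exact h.symm
        · exact absurd h hxc
      have hbypass_support' : a ∉ wT.bypass.reverse.support := by
        rwa [SimpleGraph.Walk.support_reverse, List.mem_reverse]
      have q1path : (wT.bypass.reverse.concat hxadj).IsPath := by
        rw [SimpleGraph.Walk.isPath_def, SimpleGraph.Walk.support_concat]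
        rw [List.nodup_append]
        refine ⟨?_, List.nodup_singleton _, ?_⟩
        · rw [SimpleGraph.Walk.support_reverse]
          exact List.nodup_reverse.mpr (SimpleGraph.Walk.bypass_isPath wT).support_nodup
        · intro z hz w' hz' hzw; subst hzw
          rw [List.mem_singleton] at hz'
          subst hz'
          exact hbypass_support' hz
      have p2 := cfg.path_xbva hyc
      have heq := SimpleGraph.isAcyclic_iff_path_unique.mp cfg.tree.IsAcyclic
        ⟨_, q1path⟩ ⟨_, p2⟩
      have hval : wT.bypass.reverse.concat hxadj = _ := congrArg Subtype.val heq
      have hyb : s(y, b) ∈ (wT.bypass.reverse.concat hxadj).edges := by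
        rw [hval]
        simp
      rw [SimpleGraph.Walk.edges_concat, List.concat_eq_append, List.mem_append] at hyb
      rcases hyb with hyb | hyb
      · rw [SimpleGraph.Walk.edges_reverse, List.mem_reverse] at hyb
        have hmem := hbypass_edges hyb
        exact cfg.not_Tm_adj_Cb_b hyc (w.adj_of_mem_edges hmem)
      · rw [List.mem_singleton, Sym2.eq_iff] at hyb
        rcases hyb with ⟨-, h2⟩ | ⟨h1, -⟩
        · exact cfg.hab h2.symm
        · exact hya h1
    · -- neither end in Cb : the whole rotated cycle transfers to T
      have hxadj : T.Adj a x := by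
        rcases cfg.Tm_adj_a_cases hux with h | h
        · exact h
        · exact absurd h hxc
      have hyadj : T.Adj y a := by
        rcases cfg.Tm_adj_a_cases hyu.symm with h | h
        · exact h.symm
        · exact absurd h hyc
      have hsub : ∀ e ∈ (c.rotate a hav).edges, e ∈ T.edgeSet := by
        intro e he
        rw [hedges] at he
        rcases List.mem_cons.mp he with rfl | he
        · exact (SimpleGraph.mem_edgeSet T).mpr hxadj
        rcases List.mem_append.mp he with he | he
        · exact hwT e he
        · rw [List.mem_singleton] at he
          subst he
          exact (SimpleGraph.mem_edgeSet T).mpr hyadj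
      exact cfg.tree.IsAcyclic ((c.rotate a hav).transfer T hsub) (hc'.transfer hsub)

lemma Tm_isTree : (Tm T vst a b).IsTree := ⟨cfg.Tm_conn, cfg.Tm_acyclic⟩

/-! ### distances in the modified graph -/

lemma dmv (x : V) : (Tm T vst a b).dist x vst = T.dist x vst := (cfg.anchor_vst x).2

lemma dma_B {x : V} (h1 : onSide T b vst x) (h2 : x ≠ b) :
    (Tm T vst a b).dist x a = T.dist x b := by
  rw [cfg.anchor_a, if_pos h1, if_neg h2]

lemma dma_b : (Tm T vst a b).dist b a = 2 := by
  rw [cfg.anchor_a, if_pos (onSide_self T b vst), if_pos rfl]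

lemma dma_out {x : V} (h : ¬ onSide T b vst x) : (Tm T vst a b).dist x a = T.dist x a := by
  rw [cfg.anchor_a, if_neg h]

lemma dmb_ne {x : V} (h : x ≠ b) : (Tm T vst a b).dist x b = T.dist x vst + 1 := by
  rw [cfg.anchor_b, if_neg h]

lemma Tm_adj_avst : (Tm T vst a b).Adj a vst :=
  cfg.Tm_adj_kept' cfg.ha.symm cfg.hab cfg.hbnv.symm

lemma SmA_iff (x : V) :
    onSide (Tm T vst a b) a vst x ↔ (Tm T vst a b).dist x vst = (Tm T vst a b).dist x a + 1 := by
  constructor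
  · intro h
    exact sideDistSucc cfg.Tm_isTree cfg.Tm_adj_avst h
  · intro h
    rcases onSide_total cfg.Tm_conn a vst x with h' | h'
    · exact h'
    · have := sideDistSucc cfg.Tm_isTree cfg.Tm_adj_avst.symm h'
      omega

lemma SmA_of_Sa {x : V} (h : onSide T a vst x) : onSide (Tm T vst a b) a vst x := by
  rw [cfg.SmA_iff, cfg.dmv, cfg.dma_out (fun hh => cfg.side_disj h hh), cfg.distSa h]

lemma SmA_of_B {x : V} (h1 : onSide T b vst x) (h2 : x ≠ b) :
    onSide (Tm T vst a b) a vst x := by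
  rw [cfg.SmA_iff, cfg.dmv, cfg.dma_B h1 h2, cfg.distSb h1]

lemma not_SmA_b : ¬ onSide (Tm T vst a b) a vst b := by
  rw [cfg.SmA_iff, cfg.dmv, cfg.dma_b, cfg.dist_b_vst]
  omega

lemma not_SmA_out {x : V} (h1 : ¬ onSide T a vst x) (h2 : ¬ onSide T b vst x) :
    ¬ onSide (Tm T vst a b) a vst x := by
  rw [cfg.SmA_iff, cfg.dmv, cfg.dma_out h2, cfg.dist_a_out h1]
  omega

lemma Tm_cross {x y : V} (hx : onSide (Tm T vst a b) a vst x)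
    (hy : ¬ onSide (Tm T vst a b) a vst y) :
    (Tm T vst a b).dist x y = (Tm T vst a b).dist x a + 1 + T.dist vst y := by
  rcases onSide_total cfg.Tm_conn a vst y with h' | h'
  · exact absurd h' hy
  · have h := crossDist cfg.Tm_isTree cfg.Tm_adj_avst hx h'
    rwa [SimpleGraph.dist_comm (u := vst), cfg.dmv, SimpleGraph.dist_comm (u := y)] at h

/-- pairs away from the `b`-side: the modified distance does not exceed the old one -/
lemma dist_le_out_b {u v : V} (hu : ¬ onSide T b vst u) (hv : ¬ onSide T b vst v) :
    (Tm T vst a b).dist u v ≤ T.dist u v := by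
  obtain ⟨p, hp, hl⟩ := exists_geodesic (cfg.hc u v)
  have hu' : onSide T vst b u := (onSide_total cfg.hc b vst u).resolve_left hu
  have hv' : onSide T vst b v := (onSide_total cfg.hc b vst v).resolve_left hv
  have hbs : b ∉ p.support := geodesic_avoids cfg.tree cfg.hb.symm hu' hv' hl
  have hsub : ∀ e ∈ p.edges, e ∈ (Tm T vst a b).edgeSet := by
    intro e he
    induction e using Sym2.ind with
    | _ x' y' =>
      refine (SimpleGraph.mem_edgeSet _).mpr (cfg.Tm_adj_kept' (p.adj_of_mem_edges he) ?_ ?_)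
      · rintro rfl; exact hbs (p.fst_mem_support_of_mem_edges he)
      · rintro rfl; exact hbs (p.snd_mem_support_of_mem_edges he)
  calc (Tm T vst a b).dist u v ≤ (p.transfer _ hsub).length := SimpleGraph.dist_le _
    _ = T.dist u v := by rw [SimpleGraph.Walk.length_transfer, hl]

/-- pairs away from the new `a`-side: the old distance does not exceed the modified one -/
lemma dist_ge_out_a {u v : V} (hu : ¬ onSide (Tm T vst a b) a vst u)
    (hv : ¬ onSide (Tm T vst a b) a vst v) :
    T.dist u v ≤ (Tm T vst a b).dist u v := by
  obtain ⟨p, hp, hl⟩ := exists_geodesic (cfg.Tm_conn u v)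
  have hu' : onSide (Tm T vst a b) vst a u := (onSide_total cfg.Tm_conn a vst u).resolve_left hu
  have hv' : onSide (Tm T vst a b) vst a v := (onSide_total cfg.Tm_conn a vst v).resolve_left hv
  have has : a ∉ p.support := geodesic_avoids cfg.Tm_isTree cfg.Tm_adj_avst hu' hv' hl
  have hsub : ∀ e ∈ p.edges, e ∈ T.edgeSet := by
    intro e he
    induction e using Sym2.ind with
    | _ x' y' =>
      refine (SimpleGraph.mem_edgeSet _).mpr
        (cfg.Tm_adj_not_new (p.adj_of_mem_edges he) ?_ ?_)
      · rintro rfl; exact has (p.fst_mem_support_of_mem_edges he)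
      · rintro rfl; exact has (p.snd_mem_support_of_mem_edges he)
  calc T.dist u v ≤ (p.transfer _ hsub).length := SimpleGraph.dist_le _
    _ = (Tm T vst a b).dist u v := by rw [SimpleGraph.Walk.length_transfer, hl]


/-- neighbours (in `Tm`) of vertices of the moved branch stay in the branch or hit `a` -/
lemma Tm_nbr_B {u z : V} (hu1 : onSide T b vst u) (hu2 : u ≠ b)
    (h : (Tm T vst a b).Adj u z) : (onSide T b vst z ∧ z ≠ b) ∨ z = a := by
  rcases h with ⟨h1, h2, h3⟩ | ⟨h1, h2⟩ | ⟨h1, h2⟩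
  · by_cases hz : onSide T b vst z
    · refine Or.inl ⟨hz, ?_⟩
      rintro rfl
      refine h3 ⟨rfl, ?_⟩
      rcases cfg.T_nbr_b h1.symm with h' | h'
      · exact absurd (h' ▸ hu1) cfg.vst_not_Sb
      · exact h'
    · obtain ⟨hub, -⟩ := cfg.cross_b h1 hu1 hz
      exact absurd hub hu2
  · exact absurd (h1 ▸ hu1) cfg.a_not_Sb
  · exact Or.inr h1

private lemma walk_B_exit_aux : ∀ {u t : V} (w : (Tm T vst a b).Walk u t),
    (onSide T b vst u ∧ u ≠ b) → ¬(onSide T b vst t ∧ t ≠ b) → a ∈ w.support := by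
  intro u t w
  induction w with
  | nil => exact fun hu ht => absurd hu ht
  | cons h w ih =>
    intro hu ht
    rcases cfg.Tm_nbr_B hu.1 hu.2 h with hz | hz
    · rw [SimpleGraph.Walk.support_cons]
      exact List.mem_cons_of_mem _ (ih hz ht)
    · rw [SimpleGraph.Walk.support_cons]
      exact List.mem_cons_of_mem _ (hz ▸ SimpleGraph.Walk.start_mem_support w)

/-- any walk leaving the moved branch passes through `a` -/
lemma walk_B_exit {u t : V} (w : (Tm T vst a b).Walk u t)
    (hu : onSide T b vst u ∧ u ≠ b) (ht : ¬(onSide T b vst t ∧ t ≠ b)) : a ∈ w.support :=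
  cfg.walk_B_exit_aux w hu ht

/-- pairs inside the `a`-branch: the old distance does not exceed the modified one -/
lemma dist_ge_Sa {x y : V} (hx : onSide T a vst x) (hy : onSide T a vst y) :
    T.dist x y ≤ (Tm T vst a b).dist x y := by
  obtain ⟨p, hp, hl⟩ := exists_geodesic (cfg.Tm_conn x y)
  have hvs : vst ∉ p.support :=
    geodesic_avoids cfg.Tm_isTree cfg.Tm_adj_avst.symm (cfg.SmA_of_Sa hx)
      (cfg.SmA_of_Sa hy) hl
  have hxb : x ≠ b := fun hh => cfg.b_not_Sa (hh ▸ hx)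
  have hyb : y ≠ b := fun hh => cfg.b_not_Sa (hh ▸ hy)
  have hBs : ∀ c ∈ p.support, ¬(onSide T b vst c ∧ c ≠ b) := by
    intro c hcs hc
    have hac : a ≠ c := fun hh => cfg.a_not_Sb (hh ▸ hc.1)
    have hxB : ¬(onSide T b vst x ∧ x ≠ b) := fun hh => cfg.side_disj hx hh.1
    have hyB : ¬(onSide T b vst y ∧ y ≠ b) := fun hh => cfg.side_disj hy hh.1
    have h1 : a ∈ (p.takeUntil c hcs).support := by
      have := cfg.walk_B_exit (p.takeUntil c hcs).reverse hc hxB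
      rwa [SimpleGraph.Walk.support_reverse, List.mem_reverse] at this
    have h2 : a ∈ (p.dropUntil c hcs).support.tail := by
      have h2' := cfg.walk_B_exit (p.dropUntil c hcs) hc hyB
      rw [SimpleGraph.Walk.support_eq_cons] at h2'
      rcases List.mem_cons.mp h2' with h' | h'
      · exact absurd h' hac
      · exact h'
    have hnd := hp.support_nodup
    rw [← SimpleGraph.Walk.take_spec p hcs, SimpleGraph.Walk.support_append] at hnd
    exact (List.disjoint_of_nodup_append hnd) h1 h2
  have hsub : ∀ e ∈ p.edges, e ∈ T.edgeSet := by
    intro e he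
    induction e using Sym2.ind with
    | _ x' y' =>
      rw [SimpleGraph.mem_edgeSet]
      rcases cfg.Tm_adj_cases (p.adj_of_mem_edges he) with h | ⟨h1, h2⟩ | ⟨h1, h2⟩
      · exact h
      · exact absurd ⟨(cfg.Cb_side h2).1, (cfg.Cb_side h2).2⟩
          (hBs y' (p.snd_mem_support_of_mem_edges he))
      · exact absurd ⟨(cfg.Cb_side h2).1, (cfg.Cb_side h2).2⟩
          (hBs x' (p.fst_mem_support_of_mem_edges he))
  calc T.dist x y ≤ (p.transfer _ hsub).length := SimpleGraph.dist_le _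
    _ = (Tm T vst a b).dist x y := by rw [SimpleGraph.Walk.length_transfer, hl]

/-- pairs inside the moved branch -/
lemma dist_le_BB {u v : V} (hu1 : onSide T b vst u) (hu2 : u ≠ b)
    (hv1 : onSide T b vst v) (hv2 : v ≠ b) :
    (Tm T vst a b).dist u v ≤ T.dist u v := by
  obtain ⟨p, hp, hl⟩ := exists_geodesic (cfg.hc u v)
  by_cases hbs : b ∈ p.support
  · obtain ⟨hsum, -, -⟩ := dist_split hl hbs
    have h1 : (Tm T vst a b).dist u v ≤
        (Tm T vst a b).dist u a + (Tm T vst a b).dist a v := cfg.Tm_conn.dist_triangle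
    rw [cfg.dma_B hu1 hu2, SimpleGraph.dist_comm (u := a), cfg.dma_B hv1 hv2] at h1
    rw [SimpleGraph.dist_comm (u := b) (v := v)] at hsum
    omega
  · have hsub : ∀ e ∈ p.edges, e ∈ (Tm T vst a b).edgeSet := by
      intro e he
      induction e using Sym2.ind with
      | _ x' y' =>
        refine (SimpleGraph.mem_edgeSet _).mpr (cfg.Tm_adj_kept' (p.adj_of_mem_edges he) ?_ ?_)
        · rintro rfl; exact hbs (p.fst_mem_support_of_mem_edges he)
        · rintro rfl; exact hbs (p.snd_mem_support_of_mem_edges he)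
    calc (Tm T vst a b).dist u v ≤ (p.transfer _ hsub).length := SimpleGraph.dist_le _
      _ = T.dist u v := by rw [SimpleGraph.Walk.length_transfer, hl]



/-! ### the key pairwise inequality -/

lemma swAB_a : swAB a b a = b := by rw [swAB, if_pos rfl]

lemma swAB_b : swAB a b b = a := by rw [swAB, if_neg (cfg.hab.symm : b ≠ a), if_pos rfl]

lemma swAB_other {z : V} (h1 : z ≠ a) (h2 : z ≠ b) : swAB a b z = z := by
  rw [swAB, if_neg h1, if_neg h2]

lemma swAB_B {z : V} (h1 : onSide T b vst z) (h2 : z ≠ b) : swAB a b z = z :=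
  cfg.swAB_other (fun hh => cfg.a_not_Sb (hh ▸ h1)) h2

lemma Bv_swAB (z : V) :
    (onSide T b vst (swAB a b z) ∧ swAB a b z ≠ b) ↔ (onSide T b vst z ∧ z ≠ b) := by
  by_cases h1 : z = a
  · subst h1
    rw [cfg.swAB_a]
    simp only [ne_eq, not_true_eq_false, and_false, false_iff]
    exact fun hh => cfg.a_not_Sb hh.1
  by_cases h2 : z = b
  · subst h2
    rw [cfg.swAB_b]
    simp only [ne_eq, not_true_eq_false, and_false, iff_false]
    exact fun hh => cfg.a_not_Sb hh.1
  · rw [cfg.swAB_other h1 h2]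

lemma key_core {u v : V} (hu : onSide T b vst u ∧ u ≠ b)
    (hv : ¬(onSide T b vst v ∧ v ≠ b)) :
    (Tm T vst a b).dist u (swAB a b v) ≤ T.dist u v := by
  by_cases hva : v = a
  · rw [hva, cfg.swAB_a, cfg.dmb_ne hu.2, cfg.distSb hu.1, cfg.dist_a_of_Sb hu.1]
  by_cases hvb : v = b
  · rw [hvb, cfg.swAB_b, cfg.dma_B hu.1 hu.2]
  · have hsv : ¬ onSide T b vst v := fun h => hv ⟨h, hvb⟩
    rw [cfg.swAB_other hva hvb]
    have h1 : (Tm T vst a b).dist u v ≤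
        (Tm T vst a b).dist u a + (Tm T vst a b).dist a v := cfg.Tm_conn.dist_triangle
    rw [cfg.dma_B hu.1 hu.2, SimpleGraph.dist_comm (u := a), cfg.dma_out hsv] at h1
    have h2 : T.dist v a ≤ T.dist v vst + 1 := by
      have := cfg.hc.dist_triangle (u := v) (v := vst) (w := a)
      rw [cfg.dist_vst_a] at this
      omega
    have h3 := cfg.dist_cross_b hu.1 hsv
    have h4 : T.dist vst v = T.dist v vst := SimpleGraph.dist_comm ..
    omega

lemma key_out {u v : V} (hu : ¬(onSide T b vst u ∧ u ≠ b))
    (hv : ¬(onSide T b vst v ∧ v ≠ b)) :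
    (Tm T vst a b).dist u v ≤ T.dist u v := by
  by_cases hub : u = b
  · by_cases hvb : v = b
    · rw [hub, hvb, SimpleGraph.dist_self, SimpleGraph.dist_self]
    · have hsv : ¬ onSide T b vst v := fun h => hv ⟨h, hvb⟩
      rw [hub, SimpleGraph.dist_comm, cfg.dmb_ne hvb,
        SimpleGraph.dist_comm (G := T) (u := b) (v := v), cfg.dist_b_out hsv]
  by_cases hvb : v = b
  · have hsu : ¬ onSide T b vst u := fun h => hu ⟨h, hub⟩
    rw [hvb, cfg.dmb_ne hub, cfg.dist_b_out hsu]
  · exact cfg.dist_le_out_b (fun h => hu ⟨h, hub⟩) (fun h => hv ⟨h, hvb⟩)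

/-- the master pairwise inequality for the pair bijection -/
lemma key_pair (u v : V) :
    (Tm T vst a b).dist (if onSide T b vst v ∧ v ≠ b then swAB a b u else u)
      (if onSide T b vst u ∧ u ≠ b then swAB a b v else v) ≤ T.dist u v := by
  by_cases hu : onSide T b vst u ∧ u ≠ b <;> by_cases hv : onSide T b vst v ∧ v ≠ b
  · rw [if_pos hu, if_pos hv, cfg.swAB_B hu.1 hu.2, cfg.swAB_B hv.1 hv.2]
    exact cfg.dist_le_BB hu.1 hu.2 hv.1 hv.2
  · rw [if_neg hv, if_pos hu]
    exact cfg.key_core hu hv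
  · rw [if_pos hv, if_neg hu]
    rw [SimpleGraph.dist_comm, SimpleGraph.dist_comm (G := T)]
    exact cfg.key_core hv hu
  · rw [if_neg hu, if_neg hv]
    exact cfg.key_out hu hv

/-- the strictly improving pair -/
lemma strict_pair : ∃ u v : V, u ≠ v ∧ (onSide T b vst u ∧ u ≠ b) ∧
    ¬(onSide T b vst v ∧ v ≠ b) ∧ v ≠ a ∧ v ≠ b ∧
    (Tm T vst a b).dist u v + 2 ≤ T.dist u v := by
  obtain ⟨c0, hc0, hc0v⟩ := cfg.hcb
  obtain ⟨ca, hca', hcav⟩ := cfg.hca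
  have hc0m : c0 ∈ CbSet T vst a b := cfg.mem_Cb_of c0 hc0 hc0v
  have hc0s := cfg.Cb_side hc0m
  have hcaSa : onSide T a vst ca := by
    refine onSide_of_adj hca'.symm ?_ (onSide_self T a vst)
    simp only [ne_eq, Sym2.eq_iff]
    rintro (⟨h1, h2⟩ | ⟨h1, h2⟩)
    · exact cfg.hanv h2
    · exact hcav h1
  have hcanb : ¬ onSide T b vst ca := fun h => cfg.side_disj hcaSa h
  have hcab : ca ≠ b := fun hh => hcanb (hh ▸ onSide_self T b vst)
  have hcaa : ca ≠ a := hca'.ne'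
  have hne : c0 ≠ ca := fun hh => hcanb (hh ▸ hc0s.1)
  refine ⟨c0, ca, hne, ⟨hc0s.1, hc0s.2⟩, fun hh => hcanb hh.1, hcaa, hcab, ?_⟩
  have hdca : T.dist ca a = 1 := dist_adj cfg.hc hca'.symm
  have h1 : (Tm T vst a b).dist c0 ca ≤
      (Tm T vst a b).dist c0 a + (Tm T vst a b).dist a ca := cfg.Tm_conn.dist_triangle
  rw [cfg.dma_B hc0s.1 hc0s.2, (cfg.Cb_dist hc0m).1, SimpleGraph.dist_comm (u := a),
    cfg.dma_out hcanb, hdca] at h1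
  have h3 := cfg.dist_cross_b hc0s.1 hcanb
  have h4 : T.dist vst ca = 2 := by
    have := cfg.distSa hcaSa
    rw [SimpleGraph.dist_comm (u := vst), this, hdca]
  rw [(cfg.Cb_dist hc0m).1, h4] at h3
  omega


/-! ### eccentricities are preserved -/

section Ecc

variable [Fintype V]

lemma swAB_invol (z : V) : swAB a b (swAB a b z) = z := by
  by_cases h1 : z = a
  · rw [h1, cfg.swAB_a, cfg.swAB_b]
  by_cases h2 : z = b
  · rw [h2, cfg.swAB_b, cfg.swAB_a]
  · rw [cfg.swAB_other h1 h2, cfg.swAB_other h1 h2]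

lemma eccT_le (x : V) : ecc T x ≤ T.dist x vst + T.dist vst x0 := by
  refine ecc_le fun y => ?_
  have h1 : T.dist x y ≤ T.dist x vst + T.dist vst y := cfg.hc.dist_triangle
  have h2 := cfg.hx0max y
  omega

lemma eccT_Sb {x : V} (h : onSide T b vst x) :
    ecc T x = T.dist x vst + T.dist vst x0 := by
  refine le_antisymm (cfg.eccT_le x) ?_
  have h1 := cfg.dist_cross_b h cfg.hx0b
  have h2 := cfg.distSb h
  have h3 := dist_le_ecc T x x0
  omega

lemma eccT_Sa {x : V} (h : onSide T a vst x) :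
    ecc T x = T.dist x vst + T.dist vst x0 := by
  refine le_antisymm (cfg.eccT_le x) ?_
  have h1 := cfg.dist_cross_a h cfg.hx0a
  have h2 := cfg.distSa h
  have h3 := dist_le_ecc T x x0
  omega

lemma ecc_Tm_le (x : V) : ecc (Tm T vst a b) x ≤ ecc T x := by
  by_cases hxa : x = a
  · refine ecc_le fun y => ?_
    rw [hxa]
    by_cases hy : onSide T b vst y ∧ y ≠ b
    · have e1 : (Tm T vst a b).dist a y = T.dist y b := by
        rw [SimpleGraph.dist_comm]; exact cfg.dma_B hy.1 hy.2
      have e2 : T.dist a y = T.dist y b + 2 := by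
        rw [SimpleGraph.dist_comm]; exact cfg.dist_a_of_Sb hy.1
      have := dist_le_ecc T a y
      omega
    · have := cfg.key_out (v := y) (fun hh => cfg.a_not_Sb hh.1) hy
      have h2 := dist_le_ecc T a y
      omega
  by_cases hxb : x = b
  · refine ecc_le fun y => ?_
    rw [hxb]
    by_cases hyb : y = b
    · rw [hyb, SimpleGraph.dist_self]; omega
    · have e1 : (Tm T vst a b).dist b y = T.dist y vst + 1 := by
        rw [SimpleGraph.dist_comm]; exact cfg.dmb_ne hyb
      have e2 : ecc T b = T.dist b vst + T.dist vst x0 := cfg.eccT_Sb (onSide_self T b vst)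
      have e3 : T.dist y vst ≤ T.dist vst x0 := by
        rw [SimpleGraph.dist_comm]; exact cfg.hx0max y
      rw [e1, e2, cfg.dist_b_vst]
      omega
  · -- x is fixed by the swap
    refine ecc_le fun y => ?_
    have hkey := cfg.key_pair x (swAB a b y)
    have hfix : (if onSide T b vst (swAB a b y) ∧ swAB a b y ≠ b then swAB a b x else x)
        = x := by
      split
      · exact cfg.swAB_other hxa hxb
      · rfl
    rw [hfix] at hkey
    by_cases hx : onSide T b vst x ∧ x ≠ b
    · rw [if_pos hx, cfg.swAB_invol] at hkey
      exact le_trans hkey (dist_le_ecc T x _)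
    · have hkey2 := cfg.key_pair x y
      have hfix2 : (if onSide T b vst y ∧ y ≠ b then swAB a b x else x) = x := by
        split
        · exact cfg.swAB_other hxa hxb
        · rfl
      rw [hfix2, if_neg hx] at hkey2
      exact le_trans hkey2 (dist_le_ecc T x y)

lemma ecc_Tm_ge (x : V) : ecc T x ≤ ecc (Tm T vst a b) x := by
  have hNe : Nonempty V := cfg.hc.nonempty
  have hx0nS : ¬ onSide (Tm T vst a b) a vst x0 := cfg.not_SmA_out cfg.hx0a cfg.hx0b
  by_cases hxs : onSide T b vst x
  · by_cases hxb : x = b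
    · have e2 : (Tm T vst a b).dist x x0 = T.dist vst x0 + 1 := by
        have hx0b' : x0 ≠ b := fun hh => cfg.hx0b (hh ▸ onSide_self T b vst)
        rw [hxb, SimpleGraph.dist_comm, cfg.dmb_ne hx0b', SimpleGraph.dist_comm (G := T)]
      have e1 : ecc T x = T.dist x vst + T.dist vst x0 := cfg.eccT_Sb hxs
      have e4 : T.dist x vst = 1 := by rw [hxb, cfg.dist_b_vst]
      have := dist_le_ecc (Tm T vst a b) x x0
      omega
    · have e1 : ecc T x = T.dist x vst + T.dist vst x0 := cfg.eccT_Sb hxs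
      have e2 : (Tm T vst a b).dist x x0 = T.dist x b + 1 + T.dist vst x0 := by
        rw [cfg.Tm_cross (cfg.SmA_of_B hxs hxb) hx0nS, cfg.dma_B hxs hxb]
      have e3 := cfg.distSb hxs
      have := dist_le_ecc (Tm T vst a b) x x0
      omega
  by_cases hxa : onSide T a vst x
  · have e1 : ecc T x = T.dist x vst + T.dist vst x0 := cfg.eccT_Sa hxa
    have e2 : (Tm T vst a b).dist x x0 = T.dist x a + 1 + T.dist vst x0 := by
      rw [cfg.Tm_cross (cfg.SmA_of_Sa hxa) hx0nS, cfg.dma_out hxs]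
    have e3 := cfg.distSa hxa
    have := dist_le_ecc (Tm T vst a b) x x0
    omega
  · -- x outside both branches
    obtain ⟨y0, hy0⟩ := exists_ecc_witness T x
    have hxnS : ¬ onSide (Tm T vst a b) a vst x := cfg.not_SmA_out hxa hxs
    have hbound : T.dist x y0 ≤ (Tm T vst a b).dist x y0 := by
      by_cases hys : onSide T b vst y0
      · by_cases hyb : y0 = b
        · have hxb : x ≠ b := fun hh => hxs (hh ▸ onSide_self T b vst)
          rw [hyb, cfg.dmb_ne hxb, cfg.dist_b_out hxs]
        · have e2 : (Tm T vst a b).dist x y0 = T.dist y0 b + 1 + T.dist vst x := by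
            rw [SimpleGraph.dist_comm, cfg.Tm_cross (cfg.SmA_of_B hys hyb) hxnS,
              cfg.dma_B hys hyb]
          have e3 := cfg.dist_cross_b hys hxs
          rw [SimpleGraph.dist_comm (G := T) (u := x) (v := y0)]
          omega
      by_cases hya : onSide T a vst y0
      · have e2 : (Tm T vst a b).dist x y0 = T.dist y0 a + 1 + T.dist vst x := by
          rw [SimpleGraph.dist_comm, cfg.Tm_cross (cfg.SmA_of_Sa hya) hxnS, cfg.dma_out hys]
        have e3 := cfg.dist_cross_a hya hxa
        rw [SimpleGraph.dist_comm (G := T) (u := x) (v := y0)]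
        omega
      · exact cfg.dist_ge_out_a hxnS (cfg.not_SmA_out hya hys)
    calc ecc T x = T.dist x y0 := hy0
      _ ≤ (Tm T vst a b).dist x y0 := hbound
      _ ≤ ecc (Tm T vst a b) x := dist_le_ecc _ x y0

lemma ecc_Tm_eq (x : V) : ecc (Tm T vst a b) x = ecc T x :=
  le_antisymm (cfg.ecc_Tm_le x) (cfg.ecc_Tm_ge x)

end Ecc


/-! ### the Wiener comparison -/

section Wiener

variable [Fintype V]

/-- the pair bijection -/
noncomputable def sP (T : SimpleGraph V) (vst a b : V) : V × V → V × V := fun p =>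
  (if onSide T b vst p.2 ∧ p.2 ≠ b then swAB a b p.1 else p.1,
   if onSide T b vst p.1 ∧ p.1 ≠ b then swAB a b p.2 else p.2)

lemma sP_invol (p : V × V) : sP T vst a b (sP T vst a b p) = p := by
  obtain ⟨u, v⟩ := p
  by_cases hu : onSide T b vst u ∧ u ≠ b <;> by_cases hv : onSide T b vst v ∧ v ≠ b
  · simp only [sP, if_pos hu, if_pos hv]
    rw [cfg.swAB_B hu.1 hu.2, cfg.swAB_B hv.1 hv.2]
    simp only [if_pos hu, if_pos hv]
    rw [cfg.swAB_B hu.1 hu.2, cfg.swAB_B hv.1 hv.2]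
  · simp only [sP, if_neg hv, if_pos hu]
    rw [cfg.swAB_invol, if_neg (fun hh => hv ((cfg.Bv_swAB v).mp hh))]
  · simp only [sP, if_pos hv, if_neg hu]
    rw [cfg.swAB_invol, if_neg (fun hh => hu ((cfg.Bv_swAB u).mp hh))]
  · simp only [sP, if_neg hu, if_neg hv]

lemma sP_mem {p : V × V} (hp : p ∈ Finset.univ.offDiag) :
    sP T vst a b p ∈ Finset.univ.offDiag := by
  obtain ⟨u, v⟩ := p
  rw [Finset.mem_offDiag] at hp ⊢
  refine ⟨Finset.mem_univ _, Finset.mem_univ _, ?_⟩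
  have hne : u ≠ v := hp.2.2
  by_cases hu : onSide T b vst u ∧ u ≠ b <;> by_cases hv : onSide T b vst v ∧ v ≠ b
  · simp only [sP, if_pos hu, if_pos hv]
    rw [cfg.swAB_B hu.1 hu.2, cfg.swAB_B hv.1 hv.2]
    exact hne
  · simp only [sP, if_neg hv, if_pos hu]
    intro hh
    refine hv ?_
    rw [← cfg.Bv_swAB v, ← hh]
    exact hu
  · simp only [sP, if_pos hv, if_neg hu]
    intro hh
    refine hu ?_
    rw [← cfg.Bv_swAB u, hh]
    exact hv
  · simp only [sP, if_neg hu, if_neg hv]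
    exact hne

lemma sum_reindex (g : ℕ → ℝ) :
    ∑ p ∈ Finset.univ.offDiag,
        g ((Tm T vst a b).dist (sP T vst a b p).1 (sP T vst a b p).2) =
      ∑ p ∈ Finset.univ.offDiag, g ((Tm T vst a b).dist p.1 p.2) := by
  refine Finset.sum_nbij' (i := sP T vst a b) (j := sP T vst a b)
    (fun p hp => cfg.sP_mem hp) (fun p hp => cfg.sP_mem hp)
    (fun p _ => cfg.sP_invol p) (fun p _ => cfg.sP_invol p) ?_
  intro p hp
  rfl

lemma key_pair' (p : V × V) :
    (Tm T vst a b).dist (sP T vst a b p).1 (sP T vst a b p).2 ≤ T.dist p.1 p.2 :=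
  cfg.key_pair p.1 p.2

lemma wiener_Tm_le {g : ℕ → ℝ} (hg : Monotone g) :
    wiener (Tm T vst a b) g ≤ wiener T g := by
  rw [wiener, wiener]
  have hsum : ∑ p ∈ Finset.univ.offDiag, g ((Tm T vst a b).dist p.1 p.2) ≤
      ∑ p ∈ Finset.univ.offDiag, g (T.dist p.1 p.2) := by
    rw [← cfg.sum_reindex g]
    exact Finset.sum_le_sum fun p _ => hg (cfg.key_pair' p)
  linarith

lemma wiener_Tm_lt {g : ℕ → ℝ} (hg : StrictMono g) :
    wiener (Tm T vst a b) g < wiener T g := by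
  rw [wiener, wiener]
  obtain ⟨u0, v0, hne, hu0, hv0, hva, hvb, hlt⟩ := cfg.strict_pair
  have hsum : ∑ p ∈ Finset.univ.offDiag, g ((Tm T vst a b).dist p.1 p.2) <
      ∑ p ∈ Finset.univ.offDiag, g (T.dist p.1 p.2) := by
    rw [← cfg.sum_reindex g]
    refine Finset.sum_lt_sum (fun p _ => hg.monotone (cfg.key_pair' p)) ?_
    refine ⟨(u0, v0), Finset.mem_offDiag.mpr ⟨Finset.mem_univ _, Finset.mem_univ _, hne⟩, ?_⟩
    have hsp : sP T vst a b (u0, v0) = (u0, v0) := by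
      simp only [sP, if_neg hv0, if_pos hu0]
      rw [cfg.swAB_other hva hvb]
    rw [hsp]
    exact hg (show (Tm T vst a b).dist u0 v0 < T.dist u0 v0 by omega)
  linarith

end Wiener


end Cfg

/-! ### building a configuration from a non-caterpillar tree -/

lemma side_disj_nbrs {T : SimpleGraph V} (hT : T.IsTree) {vst p q x : V}
    (hp : T.Adj vst p) (hq : T.Adj vst q) (hpq : p ≠ q)
    (h1 : onSide T p vst x) (h2 : onSide T q vst x) : False := by
  have hc := hT.isConnected
  have hqside : onSide T vst p q := by
    refine onSide_of_adj hq.symm ?_ (onSide_self T vst p)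
    simp only [ne_eq, Sym2.eq_iff]
    rintro (⟨hh1, -⟩ | ⟨hh1, -⟩)
    · exact hq.ne' hh1
    · exact hpq hh1.symm
  have hpside : onSide T vst q p := by
    refine onSide_of_adj hp.symm ?_ (onSide_self T vst q)
    simp only [ne_eq, Sym2.eq_iff]
    rintro (⟨hh1, -⟩ | ⟨hh1, -⟩)
    · exact hp.ne' hh1
    · exact hpq hh1
  have e1 := crossDist hT hp.symm h1 hqside
  have e2 := crossDist hT hq.symm h2 hpside
  rw [dist_adj hc hq] at e1
  rw [dist_adj hc hp] at e2
  omega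

lemma exists_other_nbr [Fintype V] {G : SimpleGraph V} {v w : V} (hadj : G.Adj v w)
    (h : ¬ IsLeaf G v) : ∃ c, G.Adj v c ∧ c ≠ w := by
  have hcard : Nat.card {u : V // G.Adj v u} ≠ 1 := h
  have : Nat.card {u : V // G.Adj v u} = Fintype.card {u : V // G.Adj v u} :=
    Nat.card_eq_fintype_card
  have hpos : 0 < Fintype.card {u : V // G.Adj v u} :=
    Fintype.card_pos_iff.mpr ⟨⟨w, hadj⟩⟩
  have h2 : 1 < Fintype.card {u : V // G.Adj v u} := by omega
  have hnt : Nontrivial {u : V // G.Adj v u} := Fintype.one_lt_card_iff_nontrivial.mp h2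
  obtain ⟨x, y, hxy⟩ := hnt.exists_pair_ne
  by_cases hx : (x : V) = w
  · refine ⟨y, y.2, ?_⟩
    intro hy
    exact hxy (Subtype.ext (hx.trans hy.symm))
  · exact ⟨x, x.2, hx⟩

lemma not_caterpillar_extract [Fintype V] {G : SimpleGraph V} (h : ¬ IsCaterpillar G) :
    ∃ v w1 w2 w3 : V, ¬ IsLeaf G v ∧ w1 ≠ w2 ∧ w1 ≠ w3 ∧ w2 ≠ w3 ∧
      (G.Adj v w1 ∧ ¬ IsLeaf G w1) ∧ (G.Adj v w2 ∧ ¬ IsLeaf G w2) ∧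
      (G.Adj v w3 ∧ ¬ IsLeaf G w3) := by
  rw [IsCaterpillar] at h
  push_neg at h
  obtain ⟨v, hv, hcard⟩ := h
  have hc2 : 2 < Fintype.card {u : V // G.Adj v u ∧ ¬ IsLeaf G u} := by
    rwa [Nat.card_eq_fintype_card] at hcard
  rw [Fintype.card_subtype] at hc2
  rw [Finset.two_lt_card_iff] at hc2
  obtain ⟨w1, w2, w3, hw1, hw2, hw3, h12, h13, h23⟩ := hc2
  rw [Finset.mem_filter] at hw1 hw2 hw3
  exact ⟨v, w1, w2, w3, hv, h12, h13, h23, hw1.2, hw2.2, hw3.2⟩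

/-- **The branch exchange**: a non-caterpillar tree admits a modification preserving all
eccentricities and not increasing (strictly decreasing, for strictly monotone `g`) the
Wiener-type index. -/
theorem exchange_main [Fintype V] {T : SimpleGraph V} (hT : T.IsTree)
    (hnc : ¬ IsCaterpillar T) :
    ∃ T' : SimpleGraph V, T'.IsTree ∧ (∀ x, ecc T' x = ecc T x) ∧
      (∀ g : ℕ → ℝ, Monotone g → wiener T' g ≤ wiener T g) ∧
      (∀ g : ℕ → ℝ, StrictMono g → wiener T' g < wiener T g) := by
  obtain ⟨vst, w1, w2, w3, hvl, h12, h13, h23, hw1, hw2, hw3⟩ := not_caterpillar_extract hnc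
  have hNe : Nonempty V := hT.isConnected.nonempty
  obtain ⟨x0, hx0⟩ := exists_ecc_witness T vst
  have hx0max : ∀ y, T.dist vst y ≤ T.dist vst x0 := fun y => hx0 ▸ dist_le_ecc T vst y
  have key : ∀ a b : V, T.Adj vst a → T.Adj vst b → a ≠ b → ¬ IsLeaf T a → ¬ IsLeaf T b →
      ¬ onSide T a vst x0 → ¬ onSide T b vst x0 →
      ∃ T' : SimpleGraph V, T'.IsTree ∧ (∀ x, ecc T' x = ecc T x) ∧
        (∀ g : ℕ → ℝ, Monotone g → wiener T' g ≤ wiener T g) ∧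
        (∀ g : ℕ → ℝ, StrictMono g → wiener T' g < wiener T g) := by
    intro a b ha hb hab hla hlb hx0a hx0b
    obtain ⟨ca, hca⟩ := exists_other_nbr ha.symm hla
    obtain ⟨cb, hcb⟩ := exists_other_nbr hb.symm hlb
    have cfg : Cfg T vst a b x0 :=
      ⟨hT, ha, hb, hab, ⟨ca, hca⟩, ⟨cb, hcb⟩, hx0a, hx0b, hx0max⟩
    exact ⟨Tm T vst a b, cfg.Tm_isTree, cfg.ecc_Tm_eq,
      fun g hg => cfg.wiener_Tm_le hg, fun g hg => cfg.wiener_Tm_lt hg⟩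
  by_cases hP1 : onSide T w1 vst x0
  · refine key w2 w3 hw2.1 hw3.1 h23 hw2.2 hw3.2 ?_ ?_
    · exact fun h => side_disj_nbrs hT hw1.1 hw2.1 h12 hP1 h
    · exact fun h => side_disj_nbrs hT hw1.1 hw3.1 h13 hP1 h
  by_cases hP2 : onSide T w2 vst x0
  · refine key w1 w3 hw1.1 hw3.1 h13 hw1.2 hw3.2 hP1 ?_
    · exact fun h => side_disj_nbrs hT hw2.1 hw3.1 h23 hP2 h
  · exact key w1 w2 hw1.1 hw2.1 h12 hw1.2 hw2.2 hP1 hP2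

lemma finite_simpleGraph [Fintype V] : Finite (SimpleGraph V) := by
  classical
  refine Finite.of_injective
    (fun (G : SimpleGraph V) (u v : V) => @decide (G.Adj u v) (Classical.propDecidable _)) ?_
  intro G H h
  ext u v
  have := congrFun (congrFun h u) v
  exact decide_eq_decide.mp this

end Exchange

end Stmt13Aux

open Stmt13Aux in
/-- For nonnegative nondecreasing `g`, among the trees with a given eccentric sequence
(realised as trees on the same vertex set, with the eccentric sequence of a given tree `G`)
that minimise `W(·;g)`, at least one is a caterpillar; and if `g` is strictly increasing,
every minimiser is a caterpillar. -/
theorem stmt13 [Fintype V] (g : ℕ → ℝ) (hg0 : ∀ n : ℕ, 0 ≤ g n) (hgmono : Monotone g)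
    (G : SimpleGraph V) (hG : G.IsTree) :
    (∃ C : SimpleGraph V, C.IsTree ∧ sameEccSeq G C ∧ IsCaterpillar C ∧
      ∀ H : SimpleGraph V, H.IsTree → sameEccSeq G H → wiener C g ≤ wiener H g) ∧
    (StrictMono g → ∀ H : SimpleGraph V, H.IsTree → sameEccSeq G H →
      (∀ H' : SimpleGraph V, H'.IsTree → sameEccSeq G H' → wiener H g ≤ wiener H' g) →
      IsCaterpillar H) := by
  classical
  have hNe : Nonempty V := hG.isConnected.nonempty
  have hfin : Finite (SimpleGraph V) := finite_simpleGraph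
  constructor
  · letI : Fintype (SimpleGraph V) := Fintype.ofFinite _
    set S : Finset (SimpleGraph V) :=
      Finset.univ.filter (fun H => H.IsTree ∧ sameEccSeq G H) with hS
    have hGS : G ∈ S := by
      rw [hS, Finset.mem_filter]
      exact ⟨Finset.mem_univ _, hG, fun k => rfl⟩
    obtain ⟨C0, hC0S, hC0min⟩ := S.exists_min_image (fun H => wiener H g) ⟨G, hGS⟩
    set S' : Finset (SimpleGraph V) := S.filter (fun H => wiener H g ≤ wiener C0 g) with hS'
    have hC0S' : C0 ∈ S' := by
      rw [hS', Finset.mem_filter]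
      exact ⟨hC0S, le_rfl⟩
    obtain ⟨C, hCS', hCmin2⟩ :=
      S'.exists_min_image (fun H => wiener H (fun n => (n : ℝ))) ⟨C0, hC0S'⟩
    rw [hS', Finset.mem_filter] at hCS'
    obtain ⟨hCS, hCle⟩ := hCS'
    rw [hS, Finset.mem_filter] at hCS
    obtain ⟨-, hCtree, hCecc⟩ := hCS
    have hCminAll : ∀ H : SimpleGraph V, H.IsTree → sameEccSeq G H →
        wiener C g ≤ wiener H g := by
      intro H hH hHecc
      have hHS : H ∈ S := by
        rw [hS, Finset.mem_filter]
        exact ⟨Finset.mem_univ _, hH, hHecc⟩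
      exact le_trans hCle (hC0min H hHS)
    refine ⟨C, hCtree, hCecc, ?_, hCminAll⟩
    by_contra hnc
    obtain ⟨C', hC'tree, hC'ecc, hC'le, hC'lt⟩ := exchange_main hCtree hnc
    have hC'seq : sameEccSeq G C' := by
      intro k
      have h1 := hCecc k
      have h2 : Nat.card {v : V // ecc C' v = k} = Nat.card {v : V // ecc C v = k} := by
        simp only [hC'ecc]
      omega
    have hC'S' : C' ∈ S' := by
      rw [hS', Finset.mem_filter, hS, Finset.mem_filter]
      refine ⟨⟨Finset.mem_univ _, hC'tree, hC'seq⟩, ?_⟩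
      exact le_trans (hC'le g hgmono) hCle
    have hlt := hC'lt (fun n => (n : ℝ)) Nat.strictMono_cast
    have hle := hCmin2 C' hC'S'
    linarith
  · intro hsg H hHtree hHecc hHmin
    by_contra hnc
    obtain ⟨H', hH'tree, hH'ecc, -, hH'lt⟩ := exchange_main hHtree hnc
    have hH'seq : sameEccSeq G H' := by
      intro k
      have h1 := hHecc k
      have h2 : Nat.card {v : V // ecc H' v = k} = Nat.card {v : V // ecc H v = k} := by
        simp only [hH'ecc]
      omega
    have := hHmin H' hH'tree hH'seq
    have := hH'lt g hsg
    linarith
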